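/- The Uniform Price Auction is a 2-approximation to the optimal liquid welfare: if x is its allocation, then W̄(x) ≥ (1/2)·W̄*, where W̄* = max over feasible allocations x' of Σ_i min(v_i·x'_i, B_i). Specifically, with players sorted so v_1 ≥ ... ≥ v_n and k the maximum integer with Σ_{j≤k} B_j ≤ v_k, one has W̄(x) ≥ Σ_{j≤k} B_j, W̄(x) ≥ v_{k+1}, and W̄* ≤ Σ_{j≤k} B_j + v_{k+1}. -/

import Mathlib

/-- the Uniform Price Auction is a 2-approximation to the optimal
liquid welfare.  Players are sorted `v 1 ≥ ... ≥ v n > 0` (1-indexed, `v j = 0`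
for `j > n`), `k` is the maximum integer with `∑_{j=1}^k B j ≤ v k`, and the
allocation `x` is given by Case I / Case II of the auction.  Then
`W̄(x) ≥ ∑_{j≤k} B j`, `W̄(x) ≥ v (k+1)`, `W̄* ≤ ∑_{j≤k} B j + v (k+1)`, and
`W̄(x) ≥ W̄*/2`. -/
theorem stmt4 (n : ℕ) (v B : ℕ → ℝ)
    (hv : ∀ i, 1 ≤ i → i ≤ n → 0 < v i) (hB : ∀ i, 1 ≤ i → i ≤ n → 0 < B i)
    (hsort : ∀ i j, 1 ≤ i → i ≤ j → j ≤ n → v j ≤ v i)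
    (hv0 : ∀ j, n < j → v j = 0)
    (k : ℕ) (hkn : k ≤ n)
    (hk : k = 0 ∨ ∑ j ∈ Finset.Icc 1 k, B j ≤ v k)
    (hkmax : ∀ m, k < m → m ≤ n → v m < ∑ j ∈ Finset.Icc 1 m, B j)
    (x : ℕ → ℝ)
    (hxI : v (k+1) < ∑ j ∈ Finset.Icc 1 k, B j → ∀ i, 1 ≤ i → i ≤ n →
      x i = if i ≤ k then B i / ∑ j ∈ Finset.Icc 1 k, B j else 0)
    (hxII : ∑ j ∈ Finset.Icc 1 k, B j ≤ v (k+1) → ∀ i, 1 ≤ i → i ≤ n →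
      x i = if i ≤ k then B i / v (k+1)
            else if i = k+1 then 1 - (∑ j ∈ Finset.Icc 1 k, B j) / v (k+1)
            else 0) :
    (∑ j ∈ Finset.Icc 1 k, B j ≤ ∑ i ∈ Finset.Icc 1 n, min (v i * x i) (B i)) ∧
    (v (k+1) ≤ ∑ i ∈ Finset.Icc 1 n, min (v i * x i) (B i)) ∧
    (∀ xstar : ℕ → ℝ, (∀ i, 0 ≤ xstar i) → ∑ i ∈ Finset.Icc 1 n, xstar i ≤ 1 →
      ∑ i ∈ Finset.Icc 1 n, min (v i * xstar i) (B i) ≤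
        (∑ j ∈ Finset.Icc 1 k, B j) + v (k+1)) ∧
    (∀ xstar : ℕ → ℝ, (∀ i, 0 ≤ xstar i) → ∑ i ∈ Finset.Icc 1 n, xstar i ≤ 1 →
      ∑ i ∈ Finset.Icc 1 n, min (v i * xstar i) (B i) ≤
        2 * ∑ i ∈ Finset.Icc 1 n, min (v i * x i) (B i)) := by
  have hIcc : ∀ m : ℕ, Finset.Icc 1 m = Finset.Ioc 0 m := fun m => by
    rw [← Finset.Icc_add_one_left_eq_Ioc]; rfl
  have hsplit : ∀ f : ℕ → ℝ, ∑ i ∈ Finset.Icc 1 n, f i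
      = (∑ i ∈ Finset.Icc 1 k, f i) + ∑ i ∈ Finset.Ioc k n, f i := fun f => by
    rw [hIcc, hIcc, Finset.sum_Ioc_consecutive f (Nat.zero_le k) hkn]
  have hvk1 : 0 ≤ v (k+1) := by
    by_cases h : k + 1 ≤ n
    · exact (hv _ (by omega) h).le
    · rw [hv0 _ (by omega)]
  -- part (c)
  have hc : ∀ xstar : ℕ → ℝ, (∀ i, 0 ≤ xstar i) → ∑ i ∈ Finset.Icc 1 n, xstar i ≤ 1 →
      ∑ i ∈ Finset.Icc 1 n, min (v i * xstar i) (B i) ≤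
        (∑ j ∈ Finset.Icc 1 k, B j) + v (k+1) := by
    intro xs hxs0 hxs1
    have hsub : Finset.Ioc k n ⊆ Finset.Icc 1 n := by
      intro i hi
      simp only [Finset.mem_Ioc] at hi
      simp only [Finset.mem_Icc]
      omega
    have hsum1 : ∑ i ∈ Finset.Ioc k n, xs i ≤ 1 :=
      le_trans (Finset.sum_le_sum_of_subset_of_nonneg hsub (fun i _ _ => hxs0 i)) hxs1
    calc ∑ i ∈ Finset.Icc 1 n, min (v i * xs i) (B i)
        = (∑ i ∈ Finset.Icc 1 k, min (v i * xs i) (B i))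
          + ∑ i ∈ Finset.Ioc k n, min (v i * xs i) (B i) := hsplit _
      _ ≤ (∑ i ∈ Finset.Icc 1 k, B i) + ∑ i ∈ Finset.Ioc k n, v (k+1) * xs i := by
          gcongr with i hi i hi
          · exact min_le_right _ _
          · simp only [Finset.mem_Ioc] at hi
            refine (min_le_left _ _).trans ?_
            exact mul_le_mul_of_nonneg_right (hsort (k+1) i (by omega) (by omega) hi.2)
              (hxs0 i)
      _ = (∑ j ∈ Finset.Icc 1 k, B j) + v (k+1) * ∑ i ∈ Finset.Ioc k n, xs i := by
          rw [Finset.mul_sum]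
      _ ≤ (∑ j ∈ Finset.Icc 1 k, B j) + v (k+1) * 1 := by gcongr
      _ = (∑ j ∈ Finset.Icc 1 k, B j) + v (k+1) := by ring
  -- handle n = 0
  rcases Nat.eq_zero_or_pos n with hn0 | hn
  · have hk0 : k = 0 := by omega
    subst hn0; subst hk0
    have he : Finset.Icc 1 0 = (∅ : Finset ℕ) := by simp
    have hv1 : v 1 = 0 := hv0 1 (by omega)
    refine ⟨by simp [he], by simp [he, hv1], hc, ?_⟩
    intro xs h0 h1
    have := hc xs h0 h1
    simp [he, hv1] at this ⊢
  -- n ≥ 1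
  have hab : (∑ j ∈ Finset.Icc 1 k, B j ≤ ∑ i ∈ Finset.Icc 1 n, min (v i * x i) (B i)) ∧
      (v (k+1) ≤ ∑ i ∈ Finset.Icc 1 n, min (v i * x i) (B i)) := by
    by_cases hcase : v (k+1) < ∑ j ∈ Finset.Icc 1 k, B j
    · -- Case I
      have hk1 : 1 ≤ k := by
        by_contra h
        have hk0 : k = 0 := by omega
        rw [hk0] at hcase
        simp at hcase
        exact absurd hcase (not_lt.mpr (hv 1 le_rfl hn).le)
      have hSpos : 0 < ∑ j ∈ Finset.Icc 1 k, B j :=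
        Finset.sum_pos (fun i hi => by
          simp only [Finset.mem_Icc] at hi
          exact hB i hi.1 (le_trans hi.2 hkn)) (Finset.nonempty_Icc.mpr hk1)
      have hSvk : ∑ j ∈ Finset.Icc 1 k, B j ≤ v k := by
        rcases hk with h | h
        · omega
        · exact h
      have h2 : ∑ i ∈ Finset.Ioc k n, min (v i * x i) (B i) = 0 :=
        Finset.sum_eq_zero (fun i hi => by
          simp only [Finset.mem_Ioc] at hi
          rw [hxI hcase i (by omega) hi.2, if_neg (by omega), mul_zero]
          exact min_eq_left (hB i (by omega) hi.2).le)
      have h3 : ∑ i ∈ Finset.Icc 1 k, min (v i * x i) (B i) = ∑ i ∈ Finset.Icc 1 k, B i :=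
        Finset.sum_congr rfl (fun i hi => by
          obtain ⟨hi1, hik⟩ := Finset.mem_Icc.mp hi
          rw [hxI hcase i hi1 (le_trans hik hkn), if_pos hik]
          apply min_eq_right
          have hvi : ∑ j ∈ Finset.Icc 1 k, B j ≤ v i :=
            hSvk.trans (hsort i k hi1 hik hkn)
          rw [← mul_div_assoc, le_div_iff₀ hSpos]
          nlinarith [hB i hi1 (le_trans hik hkn)])
      have hW : ∑ i ∈ Finset.Icc 1 n, min (v i * x i) (B i) = ∑ j ∈ Finset.Icc 1 k, B j := by
        rw [hsplit, h2, h3, add_zero]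
      exact ⟨hW.ge, by rw [hW]; exact hcase.le⟩
    · -- Case II
      push_neg at hcase
      have hkn' : k < n := by
        by_contra h
        have hkeq : k = n := by omega
        have hk1 : 1 ≤ k := by omega
        have hSpos : 0 < ∑ j ∈ Finset.Icc 1 k, B j :=
          Finset.sum_pos (fun i hi => by
            simp only [Finset.mem_Icc] at hi
            exact hB i hi.1 (le_trans hi.2 hkn)) (Finset.nonempty_Icc.mpr hk1)
        rw [hv0 (k+1) (by omega)] at hcase
        linarith
      have hvkpos : 0 < v (k+1) := hv (k+1) (by omega) (by omega)
      have h3 : ∑ i ∈ Finset.Icc 1 k, min (v i * x i) (B i) = ∑ i ∈ Finset.Icc 1 k, B i :=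
        Finset.sum_congr rfl (fun i hi => by
          obtain ⟨hi1, hik⟩ := Finset.mem_Icc.mp hi
          rw [hxII hcase i hi1 (le_trans hik hkn), if_pos hik]
          apply min_eq_right
          have hvi : v (k+1) ≤ v i := hsort i (k+1) hi1 (by omega) (by omega)
          rw [← mul_div_assoc, le_div_iff₀ hvkpos]
          nlinarith [hB i hi1 (le_trans hik hkn)])
      have hterm : min (v (k+1) * x (k+1)) (B (k+1))
          = v (k+1) - ∑ j ∈ Finset.Icc 1 k, B j := by
        rw [hxII hcase (k+1) (by omega) (by omega), if_neg (by omega), if_pos rfl]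
        have hx : v (k+1) * (1 - (∑ j ∈ Finset.Icc 1 k, B j) / v (k+1))
            = v (k+1) - ∑ j ∈ Finset.Icc 1 k, B j := by
          field_simp
        rw [hx]
        apply min_eq_left
        have hmax := hkmax (k+1) (by omega) (by omega)
        rw [Finset.sum_Icc_succ_top (by omega : 1 ≤ k + 1) B] at hmax
        linarith
      have h4 : ∑ i ∈ Finset.Ioc (k+1) n, min (v i * x i) (B i) = 0 :=
        Finset.sum_eq_zero (fun i hi => by
          simp only [Finset.mem_Ioc] at hi
          rw [hxII hcase i (by omega) hi.2, if_neg (by omega), if_neg (by omega), mul_zero]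
          exact min_eq_left (hB i (by omega) hi.2).le)
      have hIocsplit : ∑ i ∈ Finset.Ioc k n, min (v i * x i) (B i)
          = min (v (k+1) * x (k+1)) (B (k+1))
            + ∑ i ∈ Finset.Ioc (k+1) n, min (v i * x i) (B i) := by
        rw [← Finset.sum_Ioc_consecutive _ (by omega : k ≤ k+1) (by omega : k+1 ≤ n),
          ← Finset.Icc_add_one_left_eq_Ioc, Finset.Icc_self, Finset.sum_singleton]
      have hW : ∑ i ∈ Finset.Icc 1 n, min (v i * x i) (B i) = v (k+1) := by
        rw [hsplit, h3, hIocsplit, hterm, h4]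
        ring
      exact ⟨by rw [hW]; exact hcase, hW.ge⟩
  refine ⟨hab.1, hab.2, hc, ?_⟩
  intro xs h0 h1
  have := hc xs h0 h1
  linarith [hab.1, hab.2]
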